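/- Fix an integer k ≥ 0 and let μ = Λ_e − kδ. For every positive real root α_{ij;n} of ŝl_e, there exists a partition λ with Λ_e − Σ_{r=1}^e b_r(λ) α_r = μ + α_{ij;n} if and only if n < k. -/

import Mathlib

namespace SleHat

/-- The standard basis vector `e_k` of `ℝ^{e+2}` (realized inside `ℕ → ℝ`). -/
def eVec (k : ℕ) : ℕ → ℝ := fun m => if m = k then 1 else 0

/-- The standard dot product on `ℝ^{e+2}`, pairing weights and coweights. -/
def dot (e : ℕ) (x y : ℕ → ℝ) : ℝ := ∑ k ∈ Finset.range (e + 2), x k * y k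

/-- The simple roots of `ŝl_e`: `α_i = e_i − e_{i+1}` for `1 ≤ i ≤ e−1` and
`α_e = −e_1 + e_e − e_{e+1}`. -/
def simpleRoot (e i : ℕ) : ℕ → ℝ :=
  if i = e then -eVec 1 + eVec e - eVec (e + 1) else eVec i - eVec (i + 1)

/-- The simple coroots of `ŝl_e`: `α_i^∨ = e_i − e_{i+1}` for `1 ≤ i ≤ e−1` and
`α_e^∨ = e_0 − e_1 + e_e`. -/
def simpleCoroot (e i : ℕ) : ℕ → ℝ :=
  if i = e then eVec 0 - eVec 1 + eVec e else eVec i - eVec (i + 1)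

/-- The null root `δ = −e_{e+1}`. -/
def nullRoot (e : ℕ) : ℕ → ℝ := -eVec (e + 1)

/-- `δ^∨ = e_0`. -/
def deltaVee : ℕ → ℝ := eVec 0

/-- The real roots `α_{ij;n} = e_i − e_j + nδ`. -/
def alphaIJ (e i j : ℕ) (n : ℤ) : ℕ → ℝ := eVec i - eVec j + (n : ℝ) • nullRoot e

/-- `α_{ij;n}` is a positive real root: `i ≠ j` in `{1,…,e}`, with `n ≥ 0` if `i < j` and
`n > 0` if `i > j`. -/
def IsPosRoot (e i j : ℕ) (n : ℤ) : Prop :=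
  1 ≤ i ∧ i ≤ e ∧ 1 ≤ j ∧ j ≤ e ∧ i ≠ j ∧ (i < j → 0 ≤ n) ∧ (j < i → 0 < n)

/-- `ν` is dominant: `α_i^∨ · ν ≥ 0` for all `i ∈ {1,…,e}`. -/
def Dominant (e : ℕ) (ν : ℕ → ℝ) : Prop :=
  ∀ i, 1 ≤ i → i ≤ e → 0 ≤ dot e (simpleCoroot e i) ν

/-- `ν ≤ Λ`: the difference `Λ − ν` is a `ℤ_{≥0}`-combination of the simple roots. -/
def LeRoot (e : ℕ) (ν Λ : ℕ → ℝ) : Prop :=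
  ∃ c : ℕ → ℕ, Λ - ν = ∑ i ∈ Finset.Icc 1 e, (c i : ℝ) • simpleRoot e i

/-- The simple reflection `s_i(ν) = ν − (α_i^∨ · ν)·α_i`. -/
def sAct (e i : ℕ) (ν : ℕ → ℝ) : ℕ → ℝ :=
  ν - dot e (simpleCoroot e i) ν • simpleRoot e i

/-- `ν ∈ supp(Λ)`, i.e. `wν ≤ Λ` for every element `w` of the Weyl group `W` generated by the
simple reflections `s_1, …, s_e` (each `s_i` is an involution, so the elements of `W` are
exactly the products of the generators). -/
def InSupp (e : ℕ) (Λ ν : ℕ → ℝ) : Prop :=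
  ∀ L : List ℕ, (∀ i ∈ L, 1 ≤ i ∧ i ≤ e) →
    LeRoot e (L.foldr (fun i x => sAct e i x) ν) Λ

/-- The statistic `k⁺_{ij}` attached to a weight `μ` (for the highest weight `Λ`):
`max({−1} ∪ {n : α_{ij;n} ∈ N_μ})` if `i < j` and `max({0} ∪ {n : α_{ij;n} ∈ N_μ})` if `i > j`,
where `N_μ` is the set of positive real roots `α` with `μ + α ∈ supp(Λ)`.
The statistic `k⁻_{ij}` is `k⁺_{ji}`. -/
noncomputable def kplus (e : ℕ) (Λ μ : ℕ → ℝ) (i j : ℕ) : ℤ :=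
  if i < j then
    sSup ({-1} ∪ {n : ℤ | 0 ≤ n ∧ InSupp e Λ (μ + alphaIJ e i j n)})
  else
    sSup ({0} ∪ {n : ℤ | 0 < n ∧ InSupp e Λ (μ + alphaIJ e i j n)})

/-- The orthogonal projection of `ℝ^{e+2}` onto the subspace
`𝔥* = {h : h_1 + ⋯ + h_e = 0}`. -/
noncomputable def proj (e : ℕ) (v : ℕ → ℝ) : ℕ → ℝ :=
  fun k => if 1 ≤ k ∧ k ≤ e then v k - (∑ r ∈ Finset.Icc 1 e, v r) / e else v k

/-- The fundamental weight `Λ_i`: the orthogonal projection onto `𝔥*` of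
`e_0 + e_1 + ⋯ + e_i`. -/
noncomputable def fundWt (e i : ℕ) : ℕ → ℝ := proj e (∑ k ∈ Finset.range (i + 1), eVec k)

/-- A partition, encoded by its (weakly decreasing, eventually zero) sequence of parts
`p 0 ≥ p 1 ≥ ⋯` (0-indexed rows). -/
def IsPartition (p : ℕ → ℕ) : Prop :=
  (∀ a b, a ≤ b → p b ≤ p a) ∧ ∃ M, ∀ k, M ≤ k → p k = 0

/-- `b_i(λ)`: the number of boxes of `λ` of residue `≡ i (mod e)`.  Boxes are pairs `(r, c)`
(0-indexed) with `c < p r`; the box `(r, c)` has residue `c − r (mod e)`. -/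
noncomputable def resCount (e : ℕ) (p : ℕ → ℕ) (i : ℕ) : ℕ :=
  Set.ncard {rc : ℕ × ℕ | rc.2 < p rc.1 ∧
    ((rc.2 : ℤ) - (rc.1 : ℤ)) % (e : ℤ) = (i : ℤ) % (e : ℤ)}

/-- The weight of a partition: `Λ_e − Σ_{i=1}^e b_i(λ) α_i`. -/
noncomputable def wtPartition (e : ℕ) (p : ℕ → ℕ) : ℕ → ℝ :=
  fundWt e e - ∑ i ∈ Finset.Icc 1 e, (resCount e p i : ℝ) • simpleRoot e i

end SleHat

namespace SleHat


private lemma eVec_apply (t s : ℕ) : eVec t s = if s = t then 1 else 0 := rfl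

private lemma sum_eVec (S : Finset ℕ) (t : ℕ) :
    ∑ s ∈ S, eVec t s = if t ∈ S then 1 else 0 := by
  simp only [eVec_apply]
  exact Finset.sum_ite_eq' S t (fun _ => (1 : ℝ))

private lemma simpleRoot_top (e m : ℕ) (hm1 : 1 ≤ m) (hm : m ≤ e) :
    simpleRoot e m (e + 1) = if m = e then -1 else 0 := by
  unfold simpleRoot
  by_cases h : m = e
  · rw [if_pos h, if_pos h]
    simp only [Pi.sub_apply, Pi.add_apply, Pi.neg_apply, eVec_apply]
    rw [if_neg (by omega), if_neg (by omega)]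
    norm_num
  · rw [if_neg h, if_neg h]
    simp only [Pi.sub_apply, eVec_apply]
    rw [if_neg (by omega), if_neg (by omega)]
    norm_num

private lemma sum_coords_simpleRoot (e m ℓ : ℕ) (hm1 : 1 ≤ m) (hme : m ≤ e)
    (hℓ1 : 1 ≤ ℓ) (hℓ : ℓ < e) :
    ∑ s ∈ Finset.Icc 1 ℓ, simpleRoot e m s
      = (if m = ℓ then 1 else 0) + (if m = e then -1 else 0) := by
  unfold simpleRoot
  by_cases h : m = e
  · rw [if_pos h, if_pos h]
    simp only [Pi.sub_apply, Pi.add_apply, Pi.neg_apply]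
    rw [Finset.sum_sub_distrib, Finset.sum_add_distrib, Finset.sum_neg_distrib,
      sum_eVec, sum_eVec, sum_eVec]
    simp only [Finset.mem_Icc]
    split_ifs <;> first | (exfalso; omega) | norm_num
  · rw [if_neg h, if_neg h]
    simp only [Pi.sub_apply]
    rw [Finset.sum_sub_distrib, sum_eVec, sum_eVec]
    simp only [Finset.mem_Icc]
    split_ifs <;> first | (exfalso; omega) | norm_num

private lemma sum_simpleRoot_Icc (e : ℕ) (a b : ℕ) (hab : a ≤ b + 1) (hb : b < e) :
    ∑ m ∈ Finset.Icc a b, simpleRoot e m = eVec a - eVec (b + 1) := by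
  induction b with
  | zero =>
    interval_cases a
    · rw [Finset.Icc_self, Finset.sum_singleton]
      unfold simpleRoot
      rw [if_neg (by omega)]
    · rw [Finset.Icc_eq_empty (by omega), Finset.sum_empty, sub_self]
  | succ b ih =>
    by_cases hab' : a = b + 2
    · subst hab'
      rw [Finset.Icc_eq_empty (by omega), Finset.sum_empty, sub_self]
    · rw [Finset.sum_Icc_succ_top (by omega), ih (by omega) (by omega)]
      rw [show simpleRoot e (b+1) = eVec (b+1) - eVec (b+2) from by
        unfold simpleRoot; rw [if_neg (by omega)]]
      rw [show b + 1 + 1 = b + 2 from rfl]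
      abel

private lemma sum_simpleRoot_all (e : ℕ) (he : 2 ≤ e) :
    ∑ m ∈ Finset.Icc 1 e, simpleRoot e m = nullRoot e := by
  obtain ⟨d, rfl⟩ : ∃ d, e = d + 1 := ⟨e - 1, by omega⟩
  rw [Finset.sum_Icc_succ_top (by omega), sum_simpleRoot_Icc _ 1 d (by omega) (by omega)]
  rw [show simpleRoot (d+1) (d+1) = -eVec 1 + eVec (d+1) - eVec (d+2) from by
    unfold simpleRoot; rw [if_pos rfl]]
  unfold nullRoot
  rw [show d + 1 + 1 = d + 2 from rfl]
  abel

private lemma sum_simpleRoot_Icc_top (e j : ℕ) (he : 2 ≤ e) (hj1 : 1 ≤ j) (hje : j ≤ e) :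
    ∑ m ∈ Finset.Icc j e, simpleRoot e m = eVec j - eVec e + simpleRoot e e := by
  obtain ⟨d, rfl⟩ : ∃ d, e = d + 1 := ⟨e - 1, by omega⟩
  rw [Finset.sum_Icc_succ_top (by omega), sum_simpleRoot_Icc _ j d (by omega) (by omega)]

private lemma box_finite (e : ℕ) (p : ℕ → ℕ) (hp : IsPartition p) (m : ℕ) :
    {rc : ℕ × ℕ | rc.2 < p rc.1 ∧ ((rc.2 : ℤ) - (rc.1 : ℤ)) % (e : ℤ) = (m : ℤ) % (e : ℤ)}.Finite := by
  obtain ⟨hmono, M, hM⟩ := hp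
  apply Set.Finite.subset ((Set.finite_Iio M).prod (Set.finite_Iio (p 0)))
  rintro ⟨r, t⟩ ⟨hlt, -⟩
  simp only [Set.mem_prod, Set.mem_Iio]
  constructor
  · by_contra hc
    push_neg at hc
    rw [hM r hc] at hlt
    omega
  · exact lt_of_lt_of_le hlt (hmono 0 r (Nat.zero_le r))


private lemma resCount_hook (e i j : ℕ) (c : ℤ) (A B : ℕ)
    (he : 1 ≤ e) (hi1 : 1 ≤ i) (hie : i ≤ e) (hj1 : 1 ≤ j) (hje : j ≤ e)
    (hc : 1 ≤ c) (hA : (A : ℤ) = (c - 1) * e + i) (hB : (B : ℤ) = (e : ℤ) - j)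
    (m : ℕ) (hm1 : 1 ≤ m) (hme : m ≤ e) :
    (resCount e (fun r => if r = 0 then A else if r ≤ B then 1 else 0) m : ℤ)
      = (c - 1) + (if m < i then 1 else 0) + (if j ≤ m then 1 else 0) := by
  have he' : (0:ℤ) < (e:ℤ) := by exact_mod_cast he
  have hA1 : (1:ℤ) ≤ (A:ℤ) := by
    rw [hA]
    nlinarith [mul_nonneg (by omega : (0:ℤ) ≤ c - 1) (le_of_lt he')]
  set qmin : ℤ := -(((m:ℤ) + (B:ℤ)) / (e:ℤ)) with hqmin
  set qmax : ℤ := ((A:ℤ) - 1 - (m:ℤ)) / (e:ℤ) with hqmax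
  have key : ∀ q : ℤ, q ∈ Finset.Icc qmin qmax ↔
      (-(B:ℤ) ≤ (m:ℤ) + q * e ∧ (m:ℤ) + q * e ≤ (A:ℤ) - 1) := by
    intro q
    rw [Finset.mem_Icc, hqmin, hqmax, neg_le, Int.le_ediv_iff_mul_le he',
      Int.le_ediv_iff_mul_le he', neg_mul]
    constructor <;> rintro ⟨h1, h2⟩ <;> exact ⟨by linarith, by linarith⟩
  set F : ℤ → ℕ × ℕ := fun q =>
    if 0 ≤ (m:ℤ) + q * e then (0, ((m:ℤ) + q * e).toNat)
    else ((-((m:ℤ) + q * e)).toNat, 0) with hFdef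
  have hcontent : ∀ q : ℤ, ((F q).2 : ℤ) - ((F q).1 : ℤ) = (m:ℤ) + q * e := by
    intro q
    by_cases h0 : 0 ≤ (m:ℤ) + q * e
    · have hF : F q = (0, ((m:ℤ) + q * e).toNat) := by simp only [hFdef]; rw [if_pos h0]
      rw [hF]
      show (((((m:ℤ) + q * e).toNat : ℕ)) : ℤ) - ((0:ℕ) : ℤ) = (m:ℤ) + q * e
      rw [Int.toNat_of_nonneg h0]
      norm_num
    · have hF : F q = ((-((m:ℤ) + q * e)).toNat, 0) := by simp only [hFdef]; rw [if_neg h0]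
      rw [hF]
      show (((0:ℕ)) : ℤ) - (((-((m:ℤ) + q * e)).toNat : ℕ) : ℤ) = (m:ℤ) + q * e
      rw [Int.toNat_of_nonneg (by linarith)]
      ring
  have hFinj : Function.Injective F := by
    intro q1 q2 hq
    have h1 := hcontent q1
    have h2 := hcontent q2
    rw [hq] at h1
    have h3 : (m:ℤ) + q1 * e = (m:ℤ) + q2 * e := h1.symm.trans h2
    have h4 : q1 * (e:ℤ) = q2 * e := by linarith
    exact mul_right_cancel₀ (ne_of_gt he') h4
  have hset : {rc : ℕ × ℕ | rc.2 < (if rc.1 = 0 then A else if rc.1 ≤ B then 1 else 0) ∧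
        ((rc.2 : ℤ) - (rc.1 : ℤ)) % (e : ℤ) = (m : ℤ) % (e : ℤ)}
      = F '' ↑(Finset.Icc qmin qmax) := by
    ext ⟨r, t⟩
    simp only [Set.mem_setOf_eq, Set.mem_image, Finset.mem_coe]
    constructor
    · rintro ⟨hlt, hres⟩
      obtain ⟨q, hq⟩ : ∃ q : ℤ, (t:ℤ) - (r:ℤ) = (m:ℤ) + q * (e:ℤ) := by
        obtain ⟨q, hq⟩ := Int.dvd_of_emod_eq_zero
          (Int.emod_eq_emod_iff_emod_sub_eq_zero.mp hres)
        exact ⟨q, by rw [mul_comm]; linarith [hq]⟩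
      by_cases hr : r = 0
      · subst hr
        rw [if_pos rfl] at hlt
        have hq' : ((m:ℤ) + q * e) = (t:ℤ) := by rw [← hq]; norm_num
        refine ⟨q, ?_, ?_⟩
        · rw [key q, hq']
          constructor
          · have : (0:ℤ) ≤ (B:ℤ) := Int.natCast_nonneg B
            have : (0:ℤ) ≤ (t:ℤ) := Int.natCast_nonneg t
            linarith
          · have : (t:ℤ) < (A:ℤ) := by exact_mod_cast hlt
            linarith
        · simp only [hFdef]
          rw [if_pos (by rw [hq']; exact Int.natCast_nonneg t), hq', Int.toNat_natCast]
      · have hr1 : 1 ≤ r := Nat.one_le_iff_ne_zero.mpr hr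
        rw [if_neg hr] at hlt
        by_cases hrB : r ≤ B
        · rw [if_pos hrB] at hlt
          have ht0 : t = 0 := by omega
          subst ht0
          have hq' : ((m:ℤ) + q * e) = -(r:ℤ) := by rw [← hq]; norm_num
          refine ⟨q, ?_, ?_⟩
          · rw [key q, hq']
            constructor
            · have : (r:ℤ) ≤ (B:ℤ) := by exact_mod_cast hrB
              linarith
            · have : (1:ℤ) ≤ (r:ℤ) := by exact_mod_cast hr1
              linarith
          · have h5 : (1:ℤ) ≤ (r:ℤ) := by exact_mod_cast hr1
            simp only [hFdef]
            rw [if_neg (by rw [hq']; omega)]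
            rw [hq', neg_neg, Int.toNat_natCast]
        · rw [if_neg hrB] at hlt
          omega
    · rintro ⟨q, hqmem, hFq⟩
      obtain ⟨hb1, hb2⟩ := (key q).mp hqmem
      by_cases h0 : 0 ≤ (m:ℤ) + q * e
      · have hF : F q = (0, ((m:ℤ) + q * e).toNat) := by simp only [hFdef]; rw [if_pos h0]
        rw [hF] at hFq
        simp only [Prod.mk.injEq] at hFq
        obtain ⟨hr0, ht0⟩ := hFq
        subst hr0
        subst ht0
        constructor
        · rw [if_pos rfl]
          have hlt : (m:ℤ) + q * e < (A:ℤ) := by linarith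
          omega
        · rw [Int.toNat_of_nonneg h0]
          simp only [Nat.cast_zero, sub_zero]
          exact Int.add_mul_emod_self_right _ _ _
      · have hF : F q = ((-((m:ℤ) + q * e)).toNat, 0) := by simp only [hFdef]; rw [if_neg h0]
        rw [hF] at hFq
        simp only [Prod.mk.injEq] at hFq
        obtain ⟨hr0, ht0⟩ := hFq
        subst hr0
        subst ht0
        push_neg at h0
        have hx0 : (0:ℤ) ≤ -((m:ℤ) + q * e) := by linarith
        have hx1 : (1:ℤ) ≤ -((m:ℤ) + q * e) := by linarith
        have hxB : -((m:ℤ) + q * e) ≤ (B:ℤ) := by linarith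
        constructor
        · rw [if_neg (by omega), if_pos (by omega)]
          omega
        · rw [Int.toNat_of_nonneg hx0]
          simp only [Nat.cast_zero, zero_sub]
          rw [neg_neg]
          exact Int.add_mul_emod_self_right _ _ _
  have hcount : resCount e (fun r => if r = 0 then A else if r ≤ B then 1 else 0) m
      = (Finset.Icc qmin qmax).card := by
    show Set.ncard _ = _
    rw [show {rc : ℕ × ℕ | rc.2 < (fun r => if r = 0 then A else if r ≤ B then 1 else 0) rc.1 ∧
        ((rc.2 : ℤ) - (rc.1 : ℤ)) % (e : ℤ) = (m : ℤ) % (e : ℤ)}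
      = {rc : ℕ × ℕ | rc.2 < (if rc.1 = 0 then A else if rc.1 ≤ B then 1 else 0) ∧
        ((rc.2 : ℤ) - (rc.1 : ℤ)) % (e : ℤ) = (m : ℤ) % (e : ℤ)} from rfl]
    rw [hset, Set.ncard_image_of_injective _ hFinj, Set.ncard_coe_finset]
  rw [hcount, Int.card_Icc]
  have hqmaxv : qmax = (c - 1) + (if m < i then 0 else -1) := by
    rw [hqmax, hA]
    rw [show (c-1) * (e:ℤ) + i - 1 - m = ((i:ℤ) - 1 - m) + (c-1) * e from by ring]
    rw [Int.add_mul_ediv_right _ _ (ne_of_gt he')]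
    by_cases hcase : m < i
    · rw [if_pos hcase, Int.ediv_eq_zero_of_lt (by push_cast; omega) (by push_cast; omega)]
      ring
    · rw [if_neg hcase]
      rw [show (i:ℤ) - 1 - m = (((i:ℤ) - 1 - m + e) + (-1) * e) from by ring]
      rw [Int.add_mul_ediv_right _ _ (ne_of_gt he')]
      rw [Int.ediv_eq_zero_of_lt (by push_cast; omega) (by push_cast; omega)]
      ring
  have hqminv : qmin = if j ≤ m then -1 else 0 := by
    rw [hqmin, hB]
    rw [show (m:ℤ) + ((e:ℤ) - j) = ((m:ℤ) - j) + 1 * e from by ring]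
    rw [Int.add_mul_ediv_right _ _ (ne_of_gt he')]
    by_cases hcase : j ≤ m
    · rw [if_pos hcase, Int.ediv_eq_zero_of_lt (by push_cast; omega) (by push_cast; omega)]
      norm_num
    · rw [if_neg hcase]
      rw [show (m:ℤ) - j = ((m:ℤ) - j + e) + (-1) * e from by ring]
      rw [Int.add_mul_ediv_right _ _ (ne_of_gt he')]
      rw [Int.ediv_eq_zero_of_lt (by push_cast; omega) (by push_cast; omega)]
      norm_num
  rw [hqmaxv, hqminv]
  split_ifs <;> omega

/-- Fix `k ≥ 0` and let `μ = Λ_e − kδ`.  For every positive real root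
`α_{ij;n}` of `ŝl_e`, there is a partition `λ` with `Λ_e − Σ_{r=1}^e b_r(λ) α_r = μ + α_{ij;n}`
if and only if `n < k`. -/
theorem exists_partition_wt_eq_add_alphaIJ (e : ℕ) (he : 2 ≤ e) (k : ℕ)
    (i j : ℕ) (n : ℤ) (h : IsPosRoot e i j n) :
    (∃ p : ℕ → ℕ, IsPartition p ∧
        wtPartition e p = (fundWt e e - (k : ℝ) • nullRoot e) + alphaIJ e i j n) ↔
      n < (k : ℤ) := by
  obtain ⟨hi, hie, hj, hje, hij, hlt1, hgt1⟩ := h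
  constructor
  · rintro ⟨p, hp, hw⟩
    unfold wtPartition at hw
    have E : (∑ m ∈ Finset.Icc 1 e, (resCount e p m : ℝ) • simpleRoot e m)
        = (k:ℝ) • nullRoot e - alphaIJ e i j n := by
      have h2 : fundWt e e - (∑ m ∈ Finset.Icc 1 e, (resCount e p m : ℝ) • simpleRoot e m)
          = fundWt e e - ((k:ℝ) • nullRoot e - alphaIJ e i j n) := by
        rw [hw]
        abel
      exact sub_right_injective h2
    -- evaluate at coordinate e+1 : b_e = k - n
    have hE := congrFun E (e+1)
    rw [Finset.sum_apply] at hE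
    have hLtop : ∀ m ∈ Finset.Icc 1 e, ((resCount e p m : ℝ) • simpleRoot e m) (e+1)
        = if m = e then -(resCount e p m : ℝ) else 0 := by
      intro m hm
      rw [Finset.mem_Icc] at hm
      rw [Pi.smul_apply, smul_eq_mul, simpleRoot_top e m hm.1 hm.2]
      split_ifs <;> ring
    rw [Finset.sum_congr rfl hLtop, Finset.sum_ite_eq'] at hE
    rw [if_pos (Finset.mem_Icc.mpr ⟨by omega, le_refl e⟩)] at hE
    have hRtop : ((k:ℝ) • nullRoot e - alphaIJ e i j n) (e+1) = (n:ℝ) - k := by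
      simp only [Pi.sub_apply, Pi.smul_apply, Pi.add_apply, Pi.neg_apply, smul_eq_mul,
        alphaIJ, nullRoot, eVec_apply]
      rw [if_neg (by omega : ¬(e+1 = i)), if_neg (by omega : ¬(e+1 = j))]
      norm_num
      ring
    rw [hRtop] at hE
    have hbe : (resCount e p e : ℝ) = (k:ℝ) - n := by linarith
    by_cases hij2 : i < j
    · -- sum coordinates 1..i
      have hE2 : (∑ s ∈ Finset.Icc 1 i,
            (∑ m ∈ Finset.Icc 1 e, (resCount e p m : ℝ) • simpleRoot e m) s)
          = ∑ s ∈ Finset.Icc 1 i, ((k:ℝ) • nullRoot e - alphaIJ e i j n) s := by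
        rw [E]
      have hL : (∑ s ∈ Finset.Icc 1 i,
            (∑ m ∈ Finset.Icc 1 e, (resCount e p m : ℝ) • simpleRoot e m) s)
          = (resCount e p i : ℝ) - (resCount e p e : ℝ) := by
        have step1 : ∀ m ∈ Finset.Icc 1 e,
            (∑ s ∈ Finset.Icc 1 i, ((resCount e p m : ℝ) • simpleRoot e m) s)
              = (if m = i then (resCount e p m : ℝ) else 0)
                + (if m = e then -(resCount e p m : ℝ) else 0) := by
          intro m hm
          rw [Finset.mem_Icc] at hm
          simp only [Pi.smul_apply, smul_eq_mul]
          rw [← Finset.mul_sum, sum_coords_simpleRoot e m i hm.1 hm.2 hi (by omega)]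
          split_ifs <;> ring
        calc (∑ s ∈ Finset.Icc 1 i,
              (∑ m ∈ Finset.Icc 1 e, (resCount e p m : ℝ) • simpleRoot e m) s)
            = ∑ s ∈ Finset.Icc 1 i, ∑ m ∈ Finset.Icc 1 e,
                ((resCount e p m : ℝ) • simpleRoot e m) s :=
              Finset.sum_congr rfl fun s _ => Finset.sum_apply s _ _
          _ = ∑ m ∈ Finset.Icc 1 e, ∑ s ∈ Finset.Icc 1 i,
                ((resCount e p m : ℝ) • simpleRoot e m) s := Finset.sum_comm
          _ = ∑ m ∈ Finset.Icc 1 e, ((if m = i then (resCount e p m : ℝ) else 0)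
                + (if m = e then -(resCount e p m : ℝ) else 0)) :=
              Finset.sum_congr rfl step1
          _ = (resCount e p i : ℝ) - (resCount e p e : ℝ) := by
              rw [Finset.sum_add_distrib, Finset.sum_ite_eq', Finset.sum_ite_eq']
              rw [if_pos (Finset.mem_Icc.mpr ⟨hi, hie⟩),
                if_pos (Finset.mem_Icc.mpr ⟨by omega, le_refl e⟩)]
              ring
      have hR : (∑ s ∈ Finset.Icc 1 i, ((k:ℝ) • nullRoot e - alphaIJ e i j n) s) = -1 := by
        have hpt : ∀ s, ((k:ℝ) • nullRoot e - alphaIJ e i j n) s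
            = ((n:ℝ) - k) * eVec (e+1) s - eVec i s + eVec j s := by
          intro s
          simp only [Pi.sub_apply, Pi.smul_apply, Pi.add_apply, Pi.neg_apply, smul_eq_mul,
            alphaIJ, nullRoot]
          ring
        rw [Finset.sum_congr rfl fun s _ => hpt s]
        rw [Finset.sum_add_distrib, Finset.sum_sub_distrib, ← Finset.mul_sum,
          sum_eVec, sum_eVec, sum_eVec]
        rw [if_neg (by rw [Finset.mem_Icc]; omega : ¬(e+1 ∈ Finset.Icc 1 i)),
          if_pos (Finset.mem_Icc.mpr ⟨hi, le_refl i⟩ : i ∈ Finset.Icc 1 i),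
          if_neg (by rw [Finset.mem_Icc]; omega : ¬(j ∈ Finset.Icc 1 i))]
        norm_num
      rw [hL, hR] at hE2
      have hnn : (0:ℝ) ≤ (resCount e p i : ℝ) := Nat.cast_nonneg _
      have : (n:ℝ) < (k:ℝ) := by linarith
      exact_mod_cast this
    · have hji : j < i := by omega
      by_cases hp0 : p 0 = 0
      · exfalso
        have hallz : ∀ r, p r = 0 := fun r => Nat.le_zero.mp (hp0 ▸ hp.1 0 r (Nat.zero_le r))
        have hzero : ∀ m, resCount e p m = 0 := by
          intro m
          have hemp : {rc : ℕ × ℕ | rc.2 < p rc.1 ∧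
              ((rc.2 : ℤ) - (rc.1 : ℤ)) % (e : ℤ) = (m : ℤ) % (e : ℤ)} = ∅ := by
            ext rc
            simp [hallz]
          unfold resCount
          rw [hemp, Set.ncard_empty]
        have hE3 := congrFun E i
        rw [Finset.sum_apply] at hE3
        simp only [hzero, Nat.cast_zero, zero_smul, Pi.zero_apply,
          Finset.sum_const_zero] at hE3
        have hRi : ((k:ℝ) • nullRoot e - alphaIJ e i j n) i = -1 := by
          simp only [Pi.sub_apply, Pi.smul_apply, Pi.add_apply, Pi.neg_apply, smul_eq_mul,
            alphaIJ, nullRoot, eVec_apply]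
          split_ifs <;> first | (exfalso; omega) | norm_num
        rw [hRi] at hE3
        norm_num at hE3
      · have hfin := box_finite e p hp e
        have hone : 0 < resCount e p e := by
          unfold resCount
          rw [Set.ncard_pos hfin]
          refine ⟨(0, 0), ?_⟩
          constructor
          · simpa using Nat.pos_of_ne_zero hp0
          · simp
        have h1r : (1:ℝ) ≤ (resCount e p e : ℝ) := by exact_mod_cast hone
        have : (n:ℝ) < (k:ℝ) := by linarith
        exact_mod_cast this
  · intro hnk
    have hc : 1 ≤ (k:ℤ) - n := by omega
    set c : ℤ := (k:ℤ) - n with hcdef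
    set A : ℕ := (c - 1).toNat * e + i with hAdef
    set B : ℕ := e - j with hBdef
    have hA1 : 1 ≤ A := le_trans hi (Nat.le_add_left i _)
    have hAcast : (A:ℤ) = (c - 1) * e + i := by
      rw [hAdef]
      push_cast [Int.toNat_of_nonneg (by omega : (0:ℤ) ≤ c - 1)]
      ring
    have hBcast : (B:ℤ) = (e:ℤ) - j := by
      rw [hBdef]
      push_cast [Nat.cast_sub hje]
      ring
    refine ⟨fun r => if r = 0 then A else if r ≤ B then 1 else 0, ⟨?_, B + 1, ?_⟩, ?_⟩
    · intro a b hab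
      dsimp only
      split_ifs <;> omega
    · intro r hr
      dsimp only
      rw [if_neg (by omega), if_neg (by omega)]
    · have hres : ∀ m ∈ Finset.Icc 1 e,
          (resCount e (fun r => if r = 0 then A else if r ≤ B then 1 else 0) m : ℝ)
            = ((c:ℝ) - 1) + (if m < i then 1 else 0) + (if j ≤ m then 1 else 0) := by
        intro m hm
        rw [Finset.mem_Icc] at hm
        have hz := resCount_hook e i j c A B (by omega) hi hie hj hje hc hAcast hBcast
          m hm.1 hm.2
        split_ifs at hz ⊢ <;> exact_mod_cast hz
      unfold wtPartition
      have hsum : (∑ m ∈ Finset.Icc 1 e,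
            (resCount e (fun r => if r = 0 then A else if r ≤ B then 1 else 0) m : ℝ)
              • simpleRoot e m)
          = (k:ℝ) • nullRoot e - alphaIJ e i j n := by
        rw [Finset.sum_congr rfl fun m hm => by rw [hres m hm]]
        simp only [add_smul]
        rw [Finset.sum_add_distrib, Finset.sum_add_distrib]
        have e1 : ∑ m ∈ Finset.Icc 1 e, ((c:ℝ) - 1) • simpleRoot e m
            = ((c:ℝ) - 1) • nullRoot e := by
          rw [← Finset.smul_sum, sum_simpleRoot_all e he]
        have e2 : ∑ m ∈ Finset.Icc 1 e, (if m < i then (1:ℝ) else 0) • simpleRoot e m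
            = eVec 1 - eVec i := by
          have hcong : ∀ m ∈ Finset.Icc 1 e, (if m < i then (1:ℝ) else 0) • simpleRoot e m
              = if m ∈ Finset.Icc 1 (i-1) then simpleRoot e m else 0 := by
            intro m hm
            rw [Finset.mem_Icc] at hm
            by_cases hmi : m < i
            · rw [if_pos hmi, if_pos (Finset.mem_Icc.mpr ⟨hm.1, by omega⟩), one_smul]
            · rw [if_neg hmi, if_neg (by rw [Finset.mem_Icc]; omega), zero_smul]
          rw [Finset.sum_congr rfl hcong, Finset.sum_ite_mem]
          rw [Finset.inter_eq_right.mpr (Finset.Icc_subset_Icc (le_refl 1) (by omega))]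
          rw [sum_simpleRoot_Icc e 1 (i-1) (by omega) (by omega)]
          rw [show i - 1 + 1 = i from by omega]
        have e3 : ∑ m ∈ Finset.Icc 1 e, (if j ≤ m then (1:ℝ) else 0) • simpleRoot e m
            = eVec j - eVec e + simpleRoot e e := by
          have hcong : ∀ m ∈ Finset.Icc 1 e, (if j ≤ m then (1:ℝ) else 0) • simpleRoot e m
              = if m ∈ Finset.Icc j e then simpleRoot e m else 0 := by
            intro m hm
            rw [Finset.mem_Icc] at hm
            by_cases hmj : j ≤ m
            · rw [if_pos hmj, if_pos (Finset.mem_Icc.mpr ⟨hmj, hm.2⟩), one_smul]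
            · rw [if_neg hmj, if_neg (by rw [Finset.mem_Icc]; omega), zero_smul]
          rw [Finset.sum_congr rfl hcong, Finset.sum_ite_mem]
          rw [Finset.inter_eq_right.mpr (Finset.Icc_subset_Icc (by omega) (le_refl e))]
          exact sum_simpleRoot_Icc_top e j he hj hje
        rw [e1, e2, e3]
        have hck : (c:ℝ) = (k:ℝ) - (n:ℝ) := by rw [hcdef]; push_cast; ring
        rw [show simpleRoot e e = -eVec 1 + eVec e - eVec (e+1) from by
          unfold simpleRoot; rw [if_pos rfl]]
        funext s
        simp only [Pi.add_apply, Pi.sub_apply, Pi.smul_apply, Pi.neg_apply, smul_eq_mul,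
          alphaIJ, nullRoot, eVec_apply, hck]
        split_ifs <;> ring
      rw [hsum]
      abel

end SleHat
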